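/- Fix integers k ≥ 1, j ≥ 0 and s ≥ 0 with 2s ≤ k−1. Let A be the set of n = 3(k+2j+1)+1 distinct lines of the real projective plane consisting of: the line z = 0, and the lines x = c·z, y = c·z, and x + y = c·z for each integer −j ≤ c ≤ k+j (the arrangement A_{A2}^{[−j,k+j]}). Let H be any one of the three lines x = (k+j−s)·z, y = (k+j−s)·z, x + y = (s−j)·z, each of which belongs to A. Then the set of intersection points {H ∩ K : K ∈ A, K ≠ H} has exactly 2k+3j+2−s elements. (Equivalently, t_{A,H} = k+3j+1+s; by the splitting-type criterion this gives T_A|_H ≅ O_H(−2k−3j−1+s) ⊕ O_H(−k−3j−2−s).) -/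

import Mathlib

noncomputable section

/-- The projective line `{a·x + b·y + c·z = 0}` regarded as the 2-dimensional subspace
of `ℝ³` cut out by the linear form with coefficients `a, b, c`. -/
def lineL (a b c : ℝ) : Submodule ℝ (Fin 3 → ℝ) :=
  LinearMap.ker
    ((a • LinearMap.proj 0 + b • LinearMap.proj 1 + c • LinearMap.proj 2 :
      (Fin 3 → ℝ) →ₗ[ℝ] ℝ))

/-- The grid arrangement: the line at infinity `z = 0` together with the lines
`x = s·z` and `y = s·z` for integers `-j ≤ s ≤ k+j`. -/
def gridLines (k j : ℕ) : Set (Submodule ℝ (Fin 3 → ℝ)) :=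
  {lineL 0 0 1} ∪
    {L | ∃ s : ℤ, -(j : ℤ) ≤ s ∧ s ≤ (k : ℤ) + j ∧
      (L = lineL 1 0 (-(s : ℝ)) ∨ L = lineL 0 1 (-(s : ℝ)))}

/-- The full deformed `A2` arrangement `A_{A2}^{[-j, k+j]}`. -/
def arrA2 (k j : ℕ) : Set (Submodule ℝ (Fin 3 → ℝ)) :=
  gridLines k j ∪
    {L | ∃ c : ℤ, -(j : ℤ) ≤ c ∧ c ≤ (k : ℤ) + j ∧ L = lineL 1 1 (-(c : ℝ))}

/-! ### Auxiliary machinery -/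

lemma mem_lineL {a b c : ℝ} {v : Fin 3 → ℝ} :
    v ∈ lineL a b c ↔ a * v 0 + b * v 1 + c * v 2 = 0 := by
  simp [lineL, LinearMap.mem_ker, LinearMap.add_apply, LinearMap.smul_apply,
    LinearMap.proj_apply, smul_eq_mul]

lemma mem_span3 {x y z : ℝ} {v : Fin 3 → ℝ} :
    v ∈ (Submodule.span ℝ {![x, y, z]} : Submodule ℝ (Fin 3 → ℝ)) ↔
      ∃ t : ℝ, v 0 = t * x ∧ v 1 = t * y ∧ v 2 = t * z := by
  rw [Submodule.mem_span_singleton]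
  constructor
  · rintro ⟨t, rfl⟩
    exact ⟨t, by simp, by simp, by simp⟩
  · rintro ⟨t, h0, h1, h2⟩
    refine ⟨t, ?_⟩
    funext i
    fin_cases i <;> simp [h0, h1, h2]

lemma ncard_Icc_int (lo hi : ℤ) : (Set.Icc lo hi).ncard = (hi + 1 - lo).toNat := by
  rw [← Finset.coe_Icc, Set.ncard_coe_finset, Int.card_Icc]

def LX (c : ℤ) : Submodule ℝ (Fin 3 → ℝ) := lineL 1 0 (-(c:ℝ))
def LY (c : ℤ) : Submodule ℝ (Fin 3 → ℝ) := lineL 0 1 (-(c:ℝ))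
def LD (c : ℤ) : Submodule ℝ (Fin 3 → ℝ) := lineL 1 1 (-(c:ℝ))
def Linf : Submodule ℝ (Fin 3 → ℝ) := lineL 0 0 1

lemma lineL_ne {a b c a' b' c' : ℝ} (v : Fin 3 → ℝ)
    (h1 : a * v 0 + b * v 1 + c * v 2 = 0) (h2 : a' * v 0 + b' * v 1 + c' * v 2 ≠ 0) :
    lineL a b c ≠ lineL a' b' c' := fun h => h2 (mem_lineL.mp (h ▸ mem_lineL.mpr h1))

lemma LX_inj : Function.Injective LX := by
  intro c c' h
  by_contra hne
  exact lineL_ne ![(c:ℝ), 0, 1] (by norm_num [Matrix.cons_val_two]) (by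
    have : (c:ℝ) ≠ c' := by exact_mod_cast hne
    norm_num [Matrix.cons_val_two]; intro h'; exact this (by linarith)) h

lemma LY_inj : Function.Injective LY := by
  intro c c' h
  by_contra hne
  exact lineL_ne ![0, (c:ℝ), 1] (by norm_num [Matrix.cons_val_two]) (by
    have : (c:ℝ) ≠ c' := by exact_mod_cast hne
    norm_num [Matrix.cons_val_two]; intro h'; exact this (by linarith)) h

lemma LD_inj : Function.Injective LD := by
  intro c c' h
  by_contra hne
  exact lineL_ne ![(c:ℝ), 0, 1] (by norm_num [Matrix.cons_val_two]) (by
    have : (c:ℝ) ≠ c' := by exact_mod_cast hne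
    norm_num [Matrix.cons_val_two]; intro h'; exact this (by linarith)) h

lemma LX_ne_LY (c c' : ℤ) : LX c ≠ LY c' :=
  lineL_ne ![(c:ℝ), c'+1, 1] (by norm_num [Matrix.cons_val_two]) (by norm_num [Matrix.cons_val_two])

lemma LX_ne_LD (c c' : ℤ) : LX c ≠ LD c' :=
  lineL_ne ![(c:ℝ), c'-c+1, 1] (by norm_num [Matrix.cons_val_two]) (by norm_num [Matrix.cons_val_two]; intro h; linarith)

lemma LY_ne_LD (c c' : ℤ) : LY c ≠ LD c' :=
  lineL_ne ![(c':ℝ)-c+1, c, 1] (by norm_num [Matrix.cons_val_two]) (by norm_num [Matrix.cons_val_two]; intro h; linarith)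

lemma Linf_ne_LX (c : ℤ) : Linf ≠ LX c :=
  lineL_ne ![1, 0, 0] (by norm_num [Matrix.cons_val_two]) (by norm_num [Matrix.cons_val_two])

lemma Linf_ne_LY (c : ℤ) : Linf ≠ LY c :=
  lineL_ne ![0, 1, 0] (by norm_num [Matrix.cons_val_two]) (by norm_num [Matrix.cons_val_two])

lemma Linf_ne_LD (c : ℤ) : Linf ≠ LD c :=
  lineL_ne ![1, 0, 0] (by norm_num [Matrix.cons_val_two]) (by norm_num [Matrix.cons_val_two])

def Sk (k j : ℕ) : Set ℤ := Set.Icc (-(j:ℤ)) ((k:ℤ)+j)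

lemma arrA2_eq (k j : ℕ) :
    arrA2 k j = insert Linf (LX '' Sk k j ∪ LY '' Sk k j ∪ LD '' Sk k j) := by
  ext L
  simp only [arrA2, gridLines, Set.mem_union, Set.mem_insert_iff, Set.mem_singleton_iff,
    Set.mem_setOf_eq, Set.mem_image, Sk, Set.mem_Icc, LX, LY, LD, Linf]
  constructor
  · rintro ((h | ⟨c, h1, h2, (h3 | h3)⟩) | ⟨c, h1, h2, h3⟩)
    · exact Or.inl h
    · exact Or.inr (Or.inl (Or.inl ⟨c, ⟨h1, h2⟩, h3.symm⟩))
    · exact Or.inr (Or.inl (Or.inr ⟨c, ⟨h1, h2⟩, h3.symm⟩))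
    · exact Or.inr (Or.inr ⟨c, ⟨h1, h2⟩, h3.symm⟩)
  · rintro (h | ((⟨c, ⟨h1, h2⟩, h3⟩ | ⟨c, ⟨h1, h2⟩, h3⟩) | ⟨c, ⟨h1, h2⟩, h3⟩))
    · exact Or.inl (Or.inl h)
    · exact Or.inl (Or.inr ⟨c, h1, h2, Or.inl h3.symm⟩)
    · exact Or.inl (Or.inr ⟨c, h1, h2, Or.inr h3.symm⟩)
    · exact Or.inr ⟨c, h1, h2, h3.symm⟩

lemma Sk_finite (k j : ℕ) : (Sk k j).Finite := Set.finite_Icc _ _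

lemma arrA2_ncard (k j : ℕ) : (arrA2 k j).ncard = 3 * (k + 2 * j + 1) + 1 := by
  have hfin := Sk_finite k j
  have hcard : (Sk k j).ncard = k + 2 * j + 1 := by
    rw [Sk, ncard_Icc_int]; omega
  have hXY : Disjoint (LX '' Sk k j) (LY '' Sk k j) := by
    rw [Set.disjoint_left]
    rintro L ⟨c, _, rfl⟩ ⟨c', _, h⟩
    exact LX_ne_LY c c' h.symm
  have hXYD : Disjoint (LX '' Sk k j ∪ LY '' Sk k j) (LD '' Sk k j) := by
    rw [Set.disjoint_left]
    rintro L (⟨c, _, rfl⟩ | ⟨c, _, rfl⟩) ⟨c', _, h⟩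
    · exact LX_ne_LD c c' h.symm
    · exact LY_ne_LD c c' h.symm
  have hnot : Linf ∉ LX '' Sk k j ∪ LY '' Sk k j ∪ LD '' Sk k j := by
    rintro ((⟨c, _, h⟩ | ⟨c, _, h⟩) | ⟨c, _, h⟩)
    · exact Linf_ne_LX c h.symm
    · exact Linf_ne_LY c h.symm
    · exact Linf_ne_LD c h.symm
  rw [arrA2_eq,
    Set.ncard_insert_of_notMem hnot (((hfin.image _).union (hfin.image _)).union (hfin.image _)),
    Set.ncard_union_eq hXYD ((hfin.image _).union (hfin.image _)) (hfin.image _),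
    Set.ncard_union_eq hXY (hfin.image _) (hfin.image _),
    Set.ncard_image_of_injective _ LX_inj, Set.ncard_image_of_injective _ LY_inj,
    Set.ncard_image_of_injective _ LD_inj, hcard]
  ring

/-! ### Intersection points -/

lemma ix_inf (m : ℤ) : LX m ⊓ Linf = Submodule.span ℝ {![0, 1, 0]} := by
  ext v
  rw [Submodule.mem_inf, LX, Linf, mem_lineL, mem_lineL, mem_span3]
  constructor
  · rintro ⟨h1, h2⟩
    have hz : v 2 = 0 := by linarith
    rw [hz] at h1
    exact ⟨v 1, by linarith, by ring, by rw [hz]; ring⟩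
  · rintro ⟨t, h0, h1, h2⟩
    constructor <;> (rw [h0, h2]; ring)

lemma ix_x {m c : ℤ} (h : m ≠ c) : LX m ⊓ LX c = Submodule.span ℝ {![0, 1, 0]} := by
  have hmc : (m:ℝ) ≠ c := by exact_mod_cast h
  ext v
  rw [Submodule.mem_inf, LX, LX, mem_lineL, mem_lineL, mem_span3]
  constructor
  · rintro ⟨h1, h2⟩
    have hz : v 2 = 0 := by
      have : ((m:ℝ) - c) * v 2 = 0 := by linarith
      rcases mul_eq_zero.mp this with h' | h'
      · exact absurd (by linarith : (m:ℝ) = c) hmc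
      · exact h'
    exact ⟨v 1, by rw [hz] at h1; linarith, by ring, by rw [hz]; ring⟩
  · rintro ⟨t, h0, h1, h2⟩
    constructor <;> (rw [h0, h2]; ring)

lemma ix_y (m c : ℤ) : LX m ⊓ LY c = Submodule.span ℝ {![(m:ℝ), (c:ℝ), 1]} := by
  ext v
  rw [Submodule.mem_inf, LX, LY, mem_lineL, mem_lineL, mem_span3]
  constructor
  · rintro ⟨h1, h2⟩
    exact ⟨v 2, by linarith, by linarith, by ring⟩
  · rintro ⟨t, h0, h1, h2⟩
    constructor
    · rw [h0, h2]; ring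
    · rw [h1, h2]; ring

lemma ix_d (m c : ℤ) : LX m ⊓ LD c = Submodule.span ℝ {![(m:ℝ), (c:ℝ) - (m:ℝ), 1]} := by
  ext v
  rw [Submodule.mem_inf, LX, LD, mem_lineL, mem_lineL, mem_span3]
  constructor
  · rintro ⟨h1, h2⟩
    exact ⟨v 2, by linarith, by linarith, by ring⟩
  · rintro ⟨t, h0, h1, h2⟩
    constructor
    · rw [h0, h2]; ring
    · rw [h0, h1, h2]; ring

lemma iy_inf (m : ℤ) : LY m ⊓ Linf = Submodule.span ℝ {![1, 0, 0]} := by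
  ext v
  rw [Submodule.mem_inf, LY, Linf, mem_lineL, mem_lineL, mem_span3]
  constructor
  · rintro ⟨h1, h2⟩
    have hz : v 2 = 0 := by linarith
    rw [hz] at h1
    exact ⟨v 0, by ring, by linarith, by rw [hz]; ring⟩
  · rintro ⟨t, h0, h1, h2⟩
    constructor <;> (rw [h1, h2]; ring)

lemma iy_y {m c : ℤ} (h : m ≠ c) : LY m ⊓ LY c = Submodule.span ℝ {![1, 0, 0]} := by
  have hmc : (m:ℝ) ≠ c := by exact_mod_cast h
  ext v
  rw [Submodule.mem_inf, LY, LY, mem_lineL, mem_lineL, mem_span3]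
  constructor
  · rintro ⟨h1, h2⟩
    have hz : v 2 = 0 := by
      have : ((m:ℝ) - c) * v 2 = 0 := by linarith
      rcases mul_eq_zero.mp this with h' | h'
      · exact absurd (by linarith : (m:ℝ) = c) hmc
      · exact h'
    exact ⟨v 0, by ring, by rw [hz] at h1; linarith, by rw [hz]; ring⟩
  · rintro ⟨t, h0, h1, h2⟩
    constructor <;> (rw [h1, h2]; ring)

lemma iy_x (m c : ℤ) : LY m ⊓ LX c = Submodule.span ℝ {![(c:ℝ), (m:ℝ), 1]} := by
  rw [inf_comm, ix_y]

lemma iy_d (m c : ℤ) : LY m ⊓ LD c = Submodule.span ℝ {![(c:ℝ) - (m:ℝ), (m:ℝ), 1]} := by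
  ext v
  rw [Submodule.mem_inf, LY, LD, mem_lineL, mem_lineL, mem_span3]
  constructor
  · rintro ⟨h1, h2⟩
    exact ⟨v 2, by linarith, by linarith, by ring⟩
  · rintro ⟨t, h0, h1, h2⟩
    constructor
    · rw [h1, h2]; ring
    · rw [h0, h1, h2]; ring

lemma id_inf (m : ℤ) : LD m ⊓ Linf = Submodule.span ℝ {![1, -1, 0]} := by
  ext v
  rw [Submodule.mem_inf, LD, Linf, mem_lineL, mem_lineL, mem_span3]
  constructor
  · rintro ⟨h1, h2⟩
    have hz : v 2 = 0 := by linarith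
    rw [hz] at h1
    exact ⟨v 0, by ring, by linarith, by rw [hz]; ring⟩
  · rintro ⟨t, h0, h1, h2⟩
    constructor
    · rw [h0, h1, h2]; ring
    · rw [h0, h1, h2]; ring

lemma id_d {m c : ℤ} (h : m ≠ c) : LD m ⊓ LD c = Submodule.span ℝ {![1, -1, 0]} := by
  have hmc : (m:ℝ) ≠ c := by exact_mod_cast h
  ext v
  rw [Submodule.mem_inf, LD, LD, mem_lineL, mem_lineL, mem_span3]
  constructor
  · rintro ⟨h1, h2⟩
    have hz : v 2 = 0 := by
      have : ((m:ℝ) - c) * v 2 = 0 := by linarith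
      rcases mul_eq_zero.mp this with h' | h'
      · exact absurd (by linarith : (m:ℝ) = c) hmc
      · exact h'
    exact ⟨v 0, by ring, by rw [hz] at h1; linarith, by rw [hz]; ring⟩
  · rintro ⟨t, h0, h1, h2⟩
    constructor
    · rw [h0, h1, h2]; ring
    · rw [h0, h1, h2]; ring

lemma id_x (m c : ℤ) : LD m ⊓ LX c = Submodule.span ℝ {![(c:ℝ), (m:ℝ) - (c:ℝ), 1]} := by
  ext v
  rw [Submodule.mem_inf, LD, LX, mem_lineL, mem_lineL, mem_span3]
  constructor
  · rintro ⟨h1, h2⟩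
    exact ⟨v 2, by linarith, by linarith, by ring⟩
  · rintro ⟨t, h0, h1, h2⟩
    constructor
    · rw [h0, h1, h2]; ring
    · rw [h0, h2]; ring

lemma id_y (m c : ℤ) : LD m ⊓ LY c = Submodule.span ℝ {![(m:ℝ) - (c:ℝ), (c:ℝ), 1]} := by
  ext v
  rw [Submodule.mem_inf, LD, LY, mem_lineL, mem_lineL, mem_span3]
  constructor
  · rintro ⟨h1, h2⟩
    exact ⟨v 2, by linarith, by linarith, by ring⟩
  · rintro ⟨t, h0, h1, h2⟩
    constructor
    · rw [h0, h1, h2]; ring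
    · rw [h1, h2]; ring

/-! ### Distinguishing intersection points -/

lemma span_pt_inj {x y x' y' : ℝ}
    (h : (Submodule.span ℝ {![x, y, 1]} : Submodule ℝ (Fin 3 → ℝ)) =
      Submodule.span ℝ {![x', y', 1]}) : x' = x ∧ y' = y := by
  have hm : ![x', y', 1] ∈ (Submodule.span ℝ {![x, y, 1]} : Submodule ℝ (Fin 3 → ℝ)) := by
    rw [h]; exact Submodule.mem_span_singleton_self _
  obtain ⟨t, h0, h1, h2⟩ := mem_span3.mp hm
  simp only [Matrix.cons_val_zero, Matrix.cons_val_one, Matrix.head_cons,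
    Matrix.cons_val_two, Matrix.tail_cons, mul_one] at h0 h1 h2
  subst h2
  exact ⟨by linarith [h0], by linarith [h1]⟩

lemma span_inf_ne {a b x y : ℝ} :
    (Submodule.span ℝ {![a, b, 0]} : Submodule ℝ (Fin 3 → ℝ)) ≠
      Submodule.span ℝ {![x, y, 1]} := by
  intro h
  have hm : ![x, y, 1] ∈ (Submodule.span ℝ {![a, b, 0]} : Submodule ℝ (Fin 3 → ℝ)) := by
    rw [h]; exact Submodule.mem_span_singleton_self _
  obtain ⟨t, _, _, h2⟩ := mem_span3.mp hm
  simp at h2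

lemma final_count (a b : ℝ) (f g : ℤ → ℝ)
    (hinj : ∀ t t' : ℤ, f t' = f t → g t' = g t → t = t') (lo hi : ℤ) :
    (insert (Submodule.span ℝ {![a, b, 0]})
      ((fun t : ℤ => (Submodule.span ℝ {![f t, g t, 1]} : Submodule ℝ (Fin 3 → ℝ))) ''
        Set.Icc lo hi)).ncard = (hi + 1 - lo).toNat + 1 := by
  have hinj' : Set.InjOn (fun t : ℤ => (Submodule.span ℝ {![f t, g t, 1]} :
      Submodule ℝ (Fin 3 → ℝ))) (Set.Icc lo hi) := by
    intro t _ t' _ h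
    obtain ⟨h1, h2⟩ := span_pt_inj h
    exact hinj t t' h1 h2
  rw [Set.ncard_insert_of_notMem ?_ ((Set.finite_Icc _ _).image _),
    Set.ncard_image_of_injOn hinj', ncard_Icc_int]
  rintro ⟨t, _, h⟩
  exact span_inf_ne h.symm

/-! ### The three cases -/

lemma memX {k j : ℕ} {c : ℤ} (h1 : -(j:ℤ) ≤ c) (h2 : c ≤ (k:ℤ) + j) : LX c ∈ arrA2 k j := by
  rw [arrA2_eq]
  exact Set.mem_insert_of_mem _ (Or.inl (Or.inl ⟨c, ⟨h1, h2⟩, rfl⟩))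

lemma memY {k j : ℕ} {c : ℤ} (h1 : -(j:ℤ) ≤ c) (h2 : c ≤ (k:ℤ) + j) : LY c ∈ arrA2 k j := by
  rw [arrA2_eq]
  exact Set.mem_insert_of_mem _ (Or.inl (Or.inr ⟨c, ⟨h1, h2⟩, rfl⟩))

lemma memD {k j : ℕ} {c : ℤ} (h1 : -(j:ℤ) ≤ c) (h2 : c ≤ (k:ℤ) + j) : LD c ∈ arrA2 k j := by
  rw [arrA2_eq]
  exact Set.mem_insert_of_mem _ (Or.inr ⟨c, ⟨h1, h2⟩, rfl⟩)

lemma memInf (k j : ℕ) : Linf ∈ arrA2 k j := by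
  rw [arrA2_eq]; exact Set.mem_insert _ _

lemma imageX (k j s : ℕ) (hsk : s < k) :
    (fun K => LX ((k:ℤ) + j - s) ⊓ K) '' (arrA2 k j \ {LX ((k:ℤ) + j - s)}) =
      insert (Submodule.span ℝ {![0, 1, 0]})
        ((fun t : ℤ => (Submodule.span ℝ
            {![((((k:ℤ) + j - s) : ℤ) : ℝ), (t:ℝ), 1]} : Submodule ℝ (Fin 3 → ℝ))) ''
          Set.Icc (-(j:ℤ) - ((k:ℤ) + j - s)) ((k:ℤ) + j)) := by
  set m : ℤ := (k:ℤ) + j - s with hm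
  ext P
  constructor
  · rintro ⟨K, ⟨hKmem, hKne⟩, rfl⟩
    rw [arrA2_eq] at hKmem
    simp only [Set.mem_insert_iff, Set.mem_union, Set.mem_image, Sk, Set.mem_Icc] at hKmem
    rcases hKmem with rfl | ((⟨c, ⟨h1, h2⟩, rfl⟩ | ⟨c, ⟨h1, h2⟩, rfl⟩) | ⟨c, ⟨h1, h2⟩, rfl⟩)
    · simp only [ix_inf]; exact Set.mem_insert _ _
    · have hne : m ≠ c := fun h => hKne (by rw [h]; rfl)
      simp only [ix_x hne]; exact Set.mem_insert _ _
    · simp only [ix_y]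
      exact Set.mem_insert_of_mem _ ⟨c, ⟨by omega, h2⟩, rfl⟩
    · simp only [ix_d]
      refine Set.mem_insert_of_mem _ ⟨c - m, ⟨by omega, by omega⟩, ?_⟩
      have : ((c - m : ℤ) : ℝ) = (c:ℝ) - (m:ℝ) := by push_cast; ring
      simp only [this]
  · rintro (rfl | ⟨t, ⟨ht1, ht2⟩, rfl⟩)
    · exact ⟨Linf, ⟨memInf k j, fun h => Linf_ne_LX m h⟩, ix_inf m⟩
    · by_cases htj : -(j:ℤ) ≤ t
      · exact ⟨LY t, ⟨memY htj ht2, fun h => LX_ne_LY m t (Set.mem_singleton_iff.mp h).symm⟩,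
          ix_y m t⟩
      · refine ⟨LD (t + m), ⟨memD (by omega) (by omega),
          fun h => LX_ne_LD m (t + m) (Set.mem_singleton_iff.mp h).symm⟩, ?_⟩
        simp only [ix_d]
        have : ((t + m : ℤ) : ℝ) - (m:ℝ) = (t:ℝ) := by push_cast; ring
        simp only [this]

lemma imageY (k j s : ℕ) (hsk : s < k) :
    (fun K => LY ((k:ℤ) + j - s) ⊓ K) '' (arrA2 k j \ {LY ((k:ℤ) + j - s)}) =
      insert (Submodule.span ℝ {![1, 0, 0]})
        ((fun t : ℤ => (Submodule.span ℝ
            {![(t:ℝ), ((((k:ℤ) + j - s) : ℤ) : ℝ), 1]} : Submodule ℝ (Fin 3 → ℝ))) ''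
          Set.Icc (-(j:ℤ) - ((k:ℤ) + j - s)) ((k:ℤ) + j)) := by
  set m : ℤ := (k:ℤ) + j - s with hm
  ext P
  constructor
  · rintro ⟨K, ⟨hKmem, hKne⟩, rfl⟩
    rw [arrA2_eq] at hKmem
    simp only [Set.mem_insert_iff, Set.mem_union, Set.mem_image, Sk, Set.mem_Icc] at hKmem
    rcases hKmem with rfl | ((⟨c, ⟨h1, h2⟩, rfl⟩ | ⟨c, ⟨h1, h2⟩, rfl⟩) | ⟨c, ⟨h1, h2⟩, rfl⟩)
    · simp only [iy_inf]; exact Set.mem_insert _ _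
    · simp only [iy_x]
      exact Set.mem_insert_of_mem _ ⟨c, ⟨by omega, h2⟩, rfl⟩
    · have hne : m ≠ c := fun h => hKne (by rw [h]; rfl)
      simp only [iy_y hne]; exact Set.mem_insert _ _
    · simp only [iy_d]
      refine Set.mem_insert_of_mem _ ⟨c - m, ⟨by omega, by omega⟩, ?_⟩
      have : ((c - m : ℤ) : ℝ) = (c:ℝ) - (m:ℝ) := by push_cast; ring
      simp only [this]
  · rintro (rfl | ⟨t, ⟨ht1, ht2⟩, rfl⟩)
    · exact ⟨Linf, ⟨memInf k j, fun h => Linf_ne_LY m h⟩, iy_inf m⟩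
    · by_cases htj : -(j:ℤ) ≤ t
      · exact ⟨LX t, ⟨memX htj ht2, fun h => LX_ne_LY t m (Set.mem_singleton_iff.mp h)⟩,
          iy_x m t⟩
      · refine ⟨LD (t + m), ⟨memD (by omega) (by omega),
          fun h => LY_ne_LD m (t + m) (Set.mem_singleton_iff.mp h).symm⟩, ?_⟩
        simp only [iy_d]
        have : ((t + m : ℤ) : ℝ) - (m:ℝ) = (t:ℝ) := by push_cast; ring
        simp only [this]

lemma imageD (k j s : ℕ) (hsk : s < k) :
    (fun K => LD ((s:ℤ) - j) ⊓ K) '' (arrA2 k j \ {LD ((s:ℤ) - j)}) =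
      insert (Submodule.span ℝ {![1, -1, 0]})
        ((fun t : ℤ => (Submodule.span ℝ
            {![(t:ℝ), (((s:ℤ) - j : ℤ) : ℝ) - (t:ℝ), 1]} : Submodule ℝ (Fin 3 → ℝ))) ''
          Set.Icc ((s:ℤ) - k - 2*j) ((k:ℤ) + j)) := by
  set m : ℤ := (s:ℤ) - j with hm
  ext P
  constructor
  · rintro ⟨K, ⟨hKmem, hKne⟩, rfl⟩
    rw [arrA2_eq] at hKmem
    simp only [Set.mem_insert_iff, Set.mem_union, Set.mem_image, Sk, Set.mem_Icc] at hKmem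
    rcases hKmem with rfl | ((⟨c, ⟨h1, h2⟩, rfl⟩ | ⟨c, ⟨h1, h2⟩, rfl⟩) | ⟨c, ⟨h1, h2⟩, rfl⟩)
    · simp only [id_inf]; exact Set.mem_insert _ _
    · simp only [id_x]
      exact Set.mem_insert_of_mem _ ⟨c, ⟨by omega, h2⟩, rfl⟩
    · simp only [id_y]
      refine Set.mem_insert_of_mem _ ⟨m - c, ⟨by omega, by omega⟩, ?_⟩
      have h1' : ((m - c : ℤ) : ℝ) = (m:ℝ) - (c:ℝ) := by push_cast; ring
      have h2' : (m:ℝ) - ((m - c : ℤ) : ℝ) = (c:ℝ) := by push_cast; ring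
      simp only [h1', h2']
      ring_nf
    · have hne : m ≠ c := fun h => hKne (by rw [h]; rfl)
      simp only [id_d hne]; exact Set.mem_insert _ _
  · rintro (rfl | ⟨t, ⟨ht1, ht2⟩, rfl⟩)
    · exact ⟨Linf, ⟨memInf k j, fun h => Linf_ne_LD m h⟩, id_inf m⟩
    · by_cases htj : -(j:ℤ) ≤ t
      · exact ⟨LX t, ⟨memX htj ht2, fun h => LX_ne_LD t m (Set.mem_singleton_iff.mp h)⟩,
          id_x m t⟩
      · refine ⟨LY (m - t), ⟨memY (by omega) (by omega),
          fun h => LY_ne_LD (m - t) m (Set.mem_singleton_iff.mp h)⟩, ?_⟩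
        simp only [id_y]
        have h1' : (m:ℝ) - ((m - t : ℤ) : ℝ) = (t:ℝ) := by push_cast; ring
        have h2' : ((m - t : ℤ) : ℝ) = (m:ℝ) - (t:ℝ) := by push_cast; ring
        simp only [h1', h2']
        ring_nf

/-- For `0 ≤ 2s ≤ k-1` and `H` one of the lines `x = (k+j-s)z`, `y = (k+j-s)z`,
`x + y = (s-j)z` of the arrangement, the set of intersection points of `H` with the
other lines has exactly `2k+3j+2-s` elements (so `t_{A,H} = k+3j+1+s`). -/
theorem jumping_line_in_arrangement (k j s : ℕ) (hk : 1 ≤ k) (hs : 2 * s ≤ k - 1)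
    (H : Submodule ℝ (Fin 3 → ℝ))
    (hH : H = lineL 1 0 (-((k : ℝ) + j - s)) ∨ H = lineL 0 1 (-((k : ℝ) + j - s)) ∨
      H = lineL 1 1 (-((s : ℝ) - j))) :
    (arrA2 k j).ncard = 3 * (k + 2 * j + 1) + 1 ∧
    H ∈ arrA2 k j ∧
    ((fun K => H ⊓ K) '' (arrA2 k j \ {H})).ncard = 2 * k + 3 * j + 2 - s := by
  have hsk : s < k := by omega
  have hcastX : lineL 1 0 (-((k : ℝ) + j - s)) = LX ((k:ℤ) + j - s) := by
    rw [LX]; congr 1; push_cast; ring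
  have hcastY : lineL 0 1 (-((k : ℝ) + j - s)) = LY ((k:ℤ) + j - s) := by
    rw [LY]; congr 1; push_cast; ring
  have hcastD : lineL 1 1 (-((s : ℝ) - j)) = LD ((s:ℤ) - j) := by
    rw [LD]; congr 1; push_cast; ring
  refine ⟨arrA2_ncard k j, ?_, ?_⟩
  · rcases hH with rfl | rfl | rfl
    · rw [hcastX]; exact memX (by omega) (by omega)
    · rw [hcastY]; exact memY (by omega) (by omega)
    · rw [hcastD]; exact memD (by omega) (by omega)
  · rcases hH with rfl | rfl | rfl
    · rw [hcastX, imageX k j s hsk,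
        final_count 0 1 (fun _ => ((((k:ℤ) + j - s) : ℤ) : ℝ)) (fun t => (t:ℝ))
          (fun t t' _ h => by simpa using h.symm) _ _]
      omega
    · rw [hcastY, imageY k j s hsk,
        final_count 1 0 (fun t => (t:ℝ)) (fun _ => ((((k:ℤ) + j - s) : ℤ) : ℝ))
          (fun t t' h _ => by simpa using h.symm) _ _]
      omega
    · rw [hcastD, imageD k j s hsk,
        final_count 1 (-1) (fun t => (t:ℝ)) (fun t => (((s:ℤ) - j : ℤ) : ℝ) - (t:ℝ))
          (fun t t' h _ => by simpa using h.symm) _ _]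
      omega
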